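/- arXiv:0901.4765 — 3 statements merged into one kernel-verified Lean document; each statement's English description precedes it below -/
import Mathlib

section
/- Let 1 ≤ n ≤ k. For every S_{n+1}-invariant polynomial function p on 𝔥_n there exists an S_{k+1}-invariant polynomial function P on 𝔥_k such that P(ι(x)) = p(x) for all x ∈ 𝔥_n; that is, the restriction map along ι from S_{k+1}-invariant polynomial functions on 𝔥_k to S_{n+1}-invariant polynomial functions on 𝔥_n is surjective. -/
set_option maxHeartbeats 1000000

noncomputable section

namespace WeylA

/-- The type-`A_m` Cartan subalgebra `𝔥_m = {x ∈ ℝ^{m+1} : ∑ x_i = 0}`. -/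
def hplane (m : ℕ) : Set (Fin (m + 1) → ℝ) := {x | ∑ i, x i = 0}

/-- The zero-padding embedding `ι : ℝ^{n+1} → ℝ^{k+1} = ℝ^{k-n} × ℝ^{n+1}`. -/
def pad (k n : ℕ) (x : Fin (n + 1) → ℝ) : (Fin (k - n) ⊕ Fin (n + 1)) → ℝ :=
  Sum.elim 0 x

end WeylA

open WeylA MvPolynomial Finset

/-- Evaluating a polynomial substitution: `eval y (aeval g F) = eval (eval y ∘ g) F`. -/
lemma eval_aeval_aux {ι σ : Type*} (y : σ → ℝ) (g : ι → MvPolynomial σ ℝ)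
    (F : MvPolynomial ι ℝ) :
    MvPolynomial.eval y (MvPolynomial.aeval g F) =
      MvPolynomial.eval (fun i => MvPolynomial.eval y (g i)) F := by
  exact MvPolynomial.comp_aeval_apply (f := g)
    (MvPolynomial.aeval y : MvPolynomial σ ℝ →ₐ[ℝ] ℝ) F

/-- The key restriction property: the big elementary symmetric polynomial, evaluated at a
zero-padded vector, is the small elementary symmetric polynomial. -/
lemma eval_pad_esymm (k n : ℕ) (x : Fin (n + 1) → ℝ) (j : ℕ) :
    MvPolynomial.eval (pad k n x) (esymm (Fin (k - n) ⊕ Fin (n + 1)) ℝ j) =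
      MvPolynomial.eval x (esymm (Fin (n + 1)) ℝ j) := by
  classical
  simp only [esymm, map_sum, map_prod, MvPolynomial.eval_X]
  rw [← Finset.sum_filter_add_sum_filter_not (Finset.powersetCard j Finset.univ)
    (fun A => ∀ a ∈ A, a.isRight = true)]
  have h2 : ∑ A ∈ (Finset.powersetCard j (Finset.univ : Finset (Fin (k - n) ⊕ Fin (n + 1)))).filter
      (fun A => ¬ ∀ a ∈ A, a.isRight = true), ∏ a ∈ A, pad k n x a = 0 := by
    refine Finset.sum_eq_zero fun A hA => ?_
    rw [Finset.mem_filter] at hA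
    obtain ⟨a, ha, hra⟩ := by push_neg at hA; exact hA.2
    refine Finset.prod_eq_zero ha ?_
    rcases a with a | a
    · rfl
    · simp at hra
  rw [h2, add_zero]
  refine (Finset.sum_bij (fun B _ => B.map ⟨Sum.inr, Sum.inr_injective⟩) ?_ ?_ ?_ ?_).symm
  · intro B hB
    rw [Finset.mem_powersetCard] at hB
    rw [Finset.mem_filter, Finset.mem_powersetCard]
    refine ⟨⟨Finset.subset_univ _, by rw [Finset.card_map]; exact hB.2⟩, ?_⟩
    intro a ha
    rcases Finset.mem_map.mp ha with ⟨b, _, rfl⟩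
    rfl
  · intro B₁ _ B₂ _ h
    exact Finset.map_injective _ h
  · intro A hA
    rw [Finset.mem_filter, Finset.mem_powersetCard] at hA
    refine ⟨A.preimage Sum.inr Sum.inr_injective.injOn, ?_, ?_⟩
    · rw [Finset.mem_powersetCard]
      constructor
      · exact Finset.subset_univ _
      · rw [← hA.1.2, Finset.card_preimage]
        congr 1
        refine Finset.filter_true_of_mem fun a ha => ?_
        have := hA.2 a ha
        rcases a with a | a
        · simp at this
        · exact ⟨a, rfl⟩
    · ext a
      constructor
      · intro ha
        rcases Finset.mem_map.mp ha with ⟨b, hb, rfl⟩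
        exact Finset.mem_preimage.mp hb
      · intro ha
        have := hA.2 a ha
        rcases a with a | a
        · simp at this
        · exact Finset.mem_map.mpr ⟨a, Finset.mem_preimage.mpr ha, rfl⟩
  · intro B hB
    rw [Finset.prod_map]
    rfl

open WeylA

/-- For `1 ≤ n ≤ k`, every `S_{n+1}`-invariant polynomial function on `𝔥_n` is the
restriction along the zero-padding embedding `ι` of an `S_{k+1}`-invariant polynomial
function on `𝔥_k`; i.e. the restriction map of invariant polynomial functions is
surjective. -/
theorem typeA_invariant_restriction_surjective
    (n k : ℕ) (hn : 1 ≤ n) (hnk : n ≤ k)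
    (q : MvPolynomial (Fin (n + 1)) ℝ)
    -- `q` defines an `S_{n+1}`-invariant function on `𝔥_n`:
    (hq : ∀ τ : Equiv.Perm (Fin (n + 1)), ∀ x ∈ hplane n,
      MvPolynomial.eval (fun j => x (τ j)) q = MvPolynomial.eval x q) :
    ∃ Q : MvPolynomial (Fin (k - n) ⊕ Fin (n + 1)) ℝ,
      -- `Q` defines an `S_{k+1}`-invariant function on `𝔥_k`:
      (∀ σ : Equiv.Perm (Fin (k - n) ⊕ Fin (n + 1)),
        ∀ y : (Fin (k - n) ⊕ Fin (n + 1)) → ℝ, (∑ i, y i) = 0 →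
          MvPolynomial.eval (fun i => y (σ i)) Q = MvPolynomial.eval y Q) ∧
      -- `Q` restricts to `q` on `𝔥_n`:
      ∀ x ∈ hplane n, MvPolynomial.eval (pad k n x) Q = MvPolynomial.eval x q := by
  classical
  -- symmetrize q
  set N : ℝ := (Nat.factorial (n + 1) : ℝ) with hN
  have hN0 : N ≠ 0 := Nat.cast_ne_zero.mpr (Nat.factorial_ne_zero _)
  set qbar : MvPolynomial (Fin (n + 1)) ℝ :=
    N⁻¹ • ∑ τ : Equiv.Perm (Fin (n + 1)), rename (⇑τ) q with hqbar
  have hsym : qbar.IsSymmetric := by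
    intro e
    rw [hqbar, map_smul, map_sum]
    congr 1
    have : ∀ τ : Equiv.Perm (Fin (n + 1)),
        rename (⇑e) (rename (⇑τ) q) = rename (⇑(e * τ)) q := by
      intro τ
      rw [rename_rename]
      rfl
    simp_rw [this]
    exact Equiv.sum_comp (Equiv.mulLeft e) (fun τ => rename (⇑τ) q)
  have heval : ∀ x ∈ hplane n, MvPolynomial.eval x qbar = MvPolynomial.eval x q := by
    intro x hx
    rw [hqbar, MvPolynomial.smul_eval, map_sum]
    have : ∀ τ : Equiv.Perm (Fin (n + 1)),
        MvPolynomial.eval x (rename (⇑τ) q) = MvPolynomial.eval x q := by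
      intro τ
      rw [MvPolynomial.eval_rename]
      exact hq τ x hx
    rw [Finset.sum_congr rfl fun τ _ => this τ, Finset.sum_const, Finset.card_univ]
    simp only [Fintype.card_perm, Fintype.card_fin, nsmul_eq_mul]
    rw [← hN, ← mul_assoc, inv_mul_cancel₀ hN0, one_mul]
  -- fundamental theorem of symmetric polynomials
  obtain ⟨F, hF⟩ := MvPolynomial.esymmAlgHom_surjective (σ := Fin (n + 1)) (R := ℝ) (n := n + 1)
    (by simp) ⟨qbar, hsym⟩
  have hFval : qbar = MvPolynomial.aeval
      (fun i : Fin (n + 1) => esymm (Fin (n + 1)) ℝ ((i : ℕ) + 1)) F := by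
    have := congrArg Subtype.val hF
    rw [MvPolynomial.esymmAlgHom_apply] at this
    exact this.symm
  refine ⟨MvPolynomial.aeval
    (fun i : Fin (n + 1) => esymm (Fin (k - n) ⊕ Fin (n + 1)) ℝ ((i : ℕ) + 1)) F, ?_, ?_⟩
  · intro σ y _
    have e1 := eval_aeval_aux (fun i => y (σ i))
      (fun i : Fin (n + 1) => esymm (Fin (k - n) ⊕ Fin (n + 1)) ℝ ((i : ℕ) + 1)) F
    have e2 := eval_aeval_aux y
      (fun i : Fin (n + 1) => esymm (Fin (k - n) ⊕ Fin (n + 1)) ℝ ((i : ℕ) + 1)) F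
    rw [e1, e2]
    have harg : (fun i : Fin (n + 1) =>
        MvPolynomial.eval (fun i => y (σ i)) (esymm (Fin (k - n) ⊕ Fin (n + 1)) ℝ ((i : ℕ) + 1)))
        = fun i : Fin (n + 1) =>
        MvPolynomial.eval y (esymm (Fin (k - n) ⊕ Fin (n + 1)) ℝ ((i : ℕ) + 1)) := by
      funext i
      conv_rhs => rw [← MvPolynomial.rename_esymm (R := ℝ) (n := (i : ℕ) + 1) (e := σ)]
      rw [MvPolynomial.eval_rename]
      rfl
    rw [harg]
  · intro x hx
    have e1 := eval_aeval_aux (pad k n x)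
      (fun i : Fin (n + 1) => esymm (Fin (k - n) ⊕ Fin (n + 1)) ℝ ((i : ℕ) + 1)) F
    have e2 := eval_aeval_aux x
      (fun i : Fin (n + 1) => esymm (Fin (n + 1)) ℝ ((i : ℕ) + 1)) F
    rw [e1, ← heval x hx, hFval, e2]
    have harg : (fun i : Fin (n + 1) =>
        MvPolynomial.eval (pad k n x) (esymm (Fin (k - n) ⊕ Fin (n + 1)) ℝ ((i : ℕ) + 1)))
        = fun i : Fin (n + 1) =>
        MvPolynomial.eval x (esymm (Fin (n + 1)) ℝ ((i : ℕ) + 1)) := by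
      funext i
      exact eval_pad_esymm k n x ((i : ℕ) + 1)
    rw [harg]
end
end

section
/- Let 1 ≤ n < k. Every polynomial function in the image of the restriction map P ↦ P ∘ ι from D_k-invariant polynomial functions on ℝ^k to polynomial functions on ℝ^n is invariant under all sign changes of coordinates (equivalently, it is a polynomial in x_1², …, x_n²). In particular, the D_n-invariant polynomial x_1⋯x_n is not in the image, so the restriction map I_{D_k}(ℝ^k) → I_{D_n}(ℝ^n) is not surjective. -/
noncomputable section

namespace WeylBC

/-- A sign vector: each entry is `±1`. -/
def IsSign {α : Type*} (ε : α → ℝ) : Prop := ∀ i, ε i = 1 ∨ ε i = -1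

/-- The signed-permutation action `x ↦ (ε_i x_{σ(i)})_i` of the hyperoctahedral group. -/
def sgnAct {α : Type*} (σ : Equiv.Perm α) (ε : α → ℝ) (x : α → ℝ) : α → ℝ :=
  fun i => ε i * x (σ i)

/-- The zero-padding embedding `ι : ℝ^n → ℝ^k = ℝ^{k-n} × ℝ^n`. -/
def pad (k n : ℕ) (x : Fin n → ℝ) : (Fin (k - n) ⊕ Fin n) → ℝ :=
  Sum.elim 0 x

/-- The image `ι(ℝ^n) ⊆ ℝ^k`. -/
def padSet (k n : ℕ) : Set ((Fin (k - n) ⊕ Fin n) → ℝ) :=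
  {y | ∀ i : Fin (k - n), y (Sum.inl i) = 0}

end WeylBC

open WeylBC

lemma WeylBC.key (n k : ℕ) (hnk : n < k)
    (Q : MvPolynomial (Fin (k - n) ⊕ Fin n) ℝ)
    (hQ : ∀ (σ : Equiv.Perm (Fin (k - n) ⊕ Fin n)) (ε : (Fin (k - n) ⊕ Fin n) → ℝ),
        IsSign ε → (∏ i, ε i) = 1 → ∀ y : (Fin (k - n) ⊕ Fin n) → ℝ,
          MvPolynomial.eval (sgnAct σ ε y) Q = MvPolynomial.eval y Q)
    (δ : Fin n → ℝ) (hδ : IsSign δ) (x : Fin n → ℝ) :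
    MvPolynomial.eval (pad k n fun j => δ j * x j) Q =
      MvPolynomial.eval (pad k n x) Q := by
  have hkn : 0 < k - n := by omega
  set i0 : Fin (k - n) := ⟨0, hkn⟩ with hi0
  set P : ℝ := ∏ j, δ j with hP
  have hPsign : P = 1 ∨ P = -1 := by
    have : P * P = 1 := by
      rw [hP, ← Finset.prod_mul_distrib]
      apply Finset.prod_eq_one
      intro j _
      rcases hδ j with h | h <;> rw [h] <;> ring
    exact mul_self_eq_one_iff.mp this
  set ε : (Fin (k - n) ⊕ Fin n) → ℝ :=
    Sum.elim (fun i => if i = i0 then P else 1) δ with hε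
  have hsign : IsSign ε := by
    rintro (i | j)
    · simp only [hε, Sum.elim_inl]
      split
      · exact hPsign
      · exact Or.inl rfl
    · exact hδ j
  have hprod : (∏ i, ε i) = 1 := by
    rw [Fintype.prod_sum_type]
    have h1 : (∏ i : Fin (k - n), ε (Sum.inl i)) = P := by
      simp [hε, Finset.prod_ite_eq']
    have h2 : (∏ j : Fin n, ε (Sum.inr j)) = P := by simp [hε, hP]
    rw [h1, h2]
    rcases hPsign with h | h <;> rw [h] <;> ring
  have := hQ (Equiv.refl _) ε hsign hprod (pad k n x)
  have heq : sgnAct (Equiv.refl _) ε (pad k n x) = pad k n fun j => δ j * x j := by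
    funext i
    rcases i with i | j
    · simp [sgnAct, pad, hε]
    · simp [sgnAct, pad, hε]
  rwa [heq] at this


/-- For `1 ≤ n < k`, every polynomial function in the image of the restriction map
`I_{D_k}(ℝ^k) → S(ℝ^n)` is invariant under all sign changes of the coordinates; in
particular the `D_n`-invariant polynomial `x_1⋯x_n` is not in the image, so the
restriction map `I_{D_k}(ℝ^k) → I_{D_n}(ℝ^n)` is not surjective. -/
theorem typeD_invariant_restriction_not_surjective
    (n k : ℕ) (hn : 1 ≤ n) (hnk : n < k) :
    -- restrictions of `D_k`-invariants are invariant under all sign changes: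
    (∀ Q : MvPolynomial (Fin (k - n) ⊕ Fin n) ℝ,
      (∀ (σ : Equiv.Perm (Fin (k - n) ⊕ Fin n)) (ε : (Fin (k - n) ⊕ Fin n) → ℝ),
        IsSign ε → (∏ i, ε i) = 1 → ∀ y : (Fin (k - n) ⊕ Fin n) → ℝ,
          MvPolynomial.eval (sgnAct σ ε y) Q = MvPolynomial.eval y Q) →
      ∀ δ : Fin n → ℝ, IsSign δ → ∀ x : Fin n → ℝ,
        MvPolynomial.eval (pad k n fun j => δ j * x j) Q =
          MvPolynomial.eval (pad k n x) Q) ∧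
    -- `x_1⋯x_n` is not in the image of the restriction map:
    ¬ ∃ Q : MvPolynomial (Fin (k - n) ⊕ Fin n) ℝ,
      (∀ (σ : Equiv.Perm (Fin (k - n) ⊕ Fin n)) (ε : (Fin (k - n) ⊕ Fin n) → ℝ),
        IsSign ε → (∏ i, ε i) = 1 → ∀ y : (Fin (k - n) ⊕ Fin n) → ℝ,
          MvPolynomial.eval (sgnAct σ ε y) Q = MvPolynomial.eval y Q) ∧
      ∀ x : Fin n → ℝ, MvPolynomial.eval (pad k n x) Q = ∏ j, x j := by
  refine ⟨fun Q hQ => WeylBC.key n k hnk Q hQ, ?_⟩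
  rintro ⟨Q, hinv, hres⟩
  set δ : Fin n → ℝ := fun j => if j = ⟨0, hn⟩ then -1 else 1 with hδdef
  have hδ : IsSign δ := by
    intro j
    simp only [hδdef]
    split
    · exact Or.inr rfl
    · exact Or.inl rfl
  have h := WeylBC.key n k hnk Q hinv δ hδ (fun _ => 1)
  rw [hres, hres] at h
  simp only [mul_one] at h
  have h1 : (∏ j, δ j) = -1 := by
    rw [hδdef]
    rw [Finset.prod_ite_eq']
    simp
  have h2 : (∏ _j : Fin n, (1 : ℝ)) = 1 := Finset.prod_const_one
  rw [h1, h2] at h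
  norm_num at h
end
end

section
/- Let ℓ ≥ 2 and k ≥ ℓ + 1, and regard 𝔥_ℓ = {x ∈ ℝ^{ℓ+1} : x_1 + ⋯ + x_{ℓ+1} = 0} as a subspace of ℝ^k via the zero-padding embedding ι into the last ℓ+1 coordinates. Then for every H_k-invariant polynomial function P on ℝ^k, the restricted polynomial q = P ∘ ι on 𝔥_ℓ is even, i.e., q(−x) = q(x) for all x ∈ 𝔥_ℓ. Consequently, since the S_{ℓ+1}-invariant polynomial x ↦ x_1³ + ⋯ + x_{ℓ+1}³ on 𝔥_ℓ is odd and not identically zero for ℓ ≥ 2, the restriction map from H_k-invariant polynomial functions on ℝ^k to S_{ℓ+1}-invariant polynomial functions on 𝔥_ℓ is not surjective. -/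
noncomputable section

open WeylBC

/-- For `ℓ ≥ 2` and `k ≥ ℓ+1`, the restriction to `𝔥_ℓ ⊆ ℝ^k` (zero-padding into the
last `ℓ+1` coordinates) of every `H_k`-invariant polynomial function on `ℝ^k` is even;
consequently, since `x ↦ x_1³+⋯+x_{ℓ+1}³` is an odd, not identically zero,
`S_{ℓ+1}`-invariant polynomial function on `𝔥_ℓ`, the restriction map from
`H_k`-invariant polynomial functions on `ℝ^k` to `S_{ℓ+1}`-invariant polynomial
functions on `𝔥_ℓ` is not surjective. -/
theorem Hk_restriction_to_hplane_even_and_not_surjective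
    (l k : ℕ) (hl : 2 ≤ l) (hk : l + 1 ≤ k) :
    -- restrictions of `H_k`-invariants to `𝔥_ℓ` are even:
    (∀ P : MvPolynomial (Fin (k - (l + 1)) ⊕ Fin (l + 1)) ℝ,
      (∀ (σ : Equiv.Perm (Fin (k - (l + 1)) ⊕ Fin (l + 1)))
         (ε : (Fin (k - (l + 1)) ⊕ Fin (l + 1)) → ℝ), IsSign ε →
        ∀ y : (Fin (k - (l + 1)) ⊕ Fin (l + 1)) → ℝ,
          MvPolynomial.eval (sgnAct σ ε y) P = MvPolynomial.eval y P) →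
      ∀ x : Fin (l + 1) → ℝ, ∑ i, x i = 0 →
        MvPolynomial.eval (pad k (l + 1) (-x)) P =
          MvPolynomial.eval (pad k (l + 1) x) P) ∧
    -- `x ↦ ∑ x_i³` on `𝔥_ℓ` is not such a restriction:
    ¬ ∃ P : MvPolynomial (Fin (k - (l + 1)) ⊕ Fin (l + 1)) ℝ,
      (∀ (σ : Equiv.Perm (Fin (k - (l + 1)) ⊕ Fin (l + 1)))
         (ε : (Fin (k - (l + 1)) ⊕ Fin (l + 1)) → ℝ), IsSign ε →
        ∀ y : (Fin (k - (l + 1)) ⊕ Fin (l + 1)) → ℝ,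
          MvPolynomial.eval (sgnAct σ ε y) P = MvPolynomial.eval y P) ∧
      ∀ x : Fin (l + 1) → ℝ, ∑ i, x i = 0 →
        MvPolynomial.eval (pad k (l + 1) x) P = ∑ i, (x i) ^ 3 := by
  have even : (∀ P : MvPolynomial (Fin (k - (l + 1)) ⊕ Fin (l + 1)) ℝ,
      (∀ (σ : Equiv.Perm (Fin (k - (l + 1)) ⊕ Fin (l + 1)))
         (ε : (Fin (k - (l + 1)) ⊕ Fin (l + 1)) → ℝ), IsSign ε →
        ∀ y : (Fin (k - (l + 1)) ⊕ Fin (l + 1)) → ℝ,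
          MvPolynomial.eval (sgnAct σ ε y) P = MvPolynomial.eval y P) →
      ∀ x : Fin (l + 1) → ℝ, ∑ i, x i = 0 →
        MvPolynomial.eval (pad k (l + 1) (-x)) P =
          MvPolynomial.eval (pad k (l + 1) x) P) := by
    intro P hP x _
    have key := hP (Equiv.refl _) (fun _ => -1) (fun _ => Or.inr rfl) (pad k (l + 1) x)
    have heq : sgnAct (Equiv.refl _) (fun _ => (-1 : ℝ)) (pad k (l + 1) x)
        = pad k (l + 1) (-x) := by
      funext i
      cases i <;> simp [sgnAct, pad]
    rw [heq] at key
    exact key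
  refine ⟨even, ?_⟩
  rintro ⟨P, hinv, hres⟩
  -- every x on the hyperplane has vanishing cube-sum
  have hzero : ∀ x : Fin (l + 1) → ℝ, ∑ i, x i = 0 → ∑ i, (x i) ^ 3 = 0 := by
    intro x hx
    have hx' : ∑ i, (-x) i = 0 := by
      simp only [Pi.neg_apply, Finset.sum_neg_distrib, hx, neg_zero]
    have h1 := hres x hx
    have h2 := hres (-x) hx'
    have h3 := even P hinv x hx
    have : ∑ i, ((-x) i) ^ 3 = ∑ i, (x i) ^ 3 := by rw [← h1, ← h2, h3]
    have hneg : ∑ i, ((-x) i) ^ 3 = -∑ i, (x i) ^ 3 := by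
      rw [← Finset.sum_neg_distrib]
      exact Finset.sum_congr rfl fun i _ => by simp; ring
    linarith
  -- pick a concrete x with sum 0 but cube-sum 6
  have h0 : (0 : ℕ) < l + 1 := by omega
  have h1 : (1 : ℕ) < l + 1 := by omega
  have h2 : (2 : ℕ) < l + 1 := by omega
  set a : Fin (l + 1) := ⟨0, h0⟩
  set b : Fin (l + 1) := ⟨1, h1⟩
  set c : Fin (l + 1) := ⟨2, h2⟩
  have hab : a ≠ b := by simp [a, b, Fin.ext_iff]
  have hac : a ≠ c := by simp [a, c, Fin.ext_iff]
  have hbc : b ≠ c := by simp [b, c, Fin.ext_iff]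
  set x : Fin (l + 1) → ℝ := fun i =>
    (if i = a then 2 else 0) + (if i = b then -1 else 0) + (if i = c then -1 else 0)
    with hxdef
  have hsum : ∑ i, x i = 0 := by
    simp only [hxdef, Finset.sum_add_distrib, Finset.sum_ite_eq', Finset.mem_univ, if_true]
    ring
  have hcube : ∀ i, (x i) ^ 3 =
      (if i = a then 8 else 0) + (if i = b then -1 else 0) + (if i = c then -1 else 0) := by
    intro i
    simp only [hxdef]
    by_cases hia : i = a
    · subst hia
      norm_num [hab, hac]
    · by_cases hib : i = b
      · subst hib
        norm_num [Ne.symm hab, hbc]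
      · by_cases hic : i = c
        · subst hic
          norm_num [Ne.symm hac, Ne.symm hbc]
        · simp [hia, hib, hic]
  have : ∑ i, (x i) ^ 3 = 6 := by
    simp only [hcube, Finset.sum_add_distrib, Finset.sum_ite_eq', Finset.mem_univ, if_true]
    ring
  have := hzero x hsum
  linarith
end
end
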